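/- Let φ be a dynamical system on a compact metric space X. For compact invariant sets S, S' with meet S ∧ S' := ω(S ∩ S'), the stable sets satisfy W^s(S ∧ S') = W^s(S) ∩ W^s(S'), where W^s(S) = {x ∈ X | ω(x) ⊆ S}. -/

import Mathlib

/-- Omega limit set of a subset under a semiflow. -/
def omegaSet {X : Type*} [TopologicalSpace X] (φ : ℝ → X → X) (A : Set X) :
    Set X :=
  ⋂ t ≥ (0 : ℝ), closure (⋃ s ≥ t, φ s '' A)

/-- Stable set of a set `S`: points whose omega limit set lies in `S`. -/
def stableSet {X : Type*} [TopologicalSpace X] (φ : ℝ → X → X) (S : Set X) :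
    Set X :=
  {x | omegaSet φ {x} ⊆ S}

/-- The stable set of the meet `S ∧ S' = ω(S ∩ S')` of two compact invariant
sets is the intersection of the stable sets. -/
theorem stableSet_inter {X : Type*} [MetricSpace X] [CompactSpace X]
    (φ : ℝ → X → X)
    (hcont : Continuous fun p : {t : ℝ // 0 ≤ t} × X => φ p.1.1 p.2)
    (h0 : ∀ x, φ 0 x = x)
    (hadd : ∀ s t : ℝ, 0 ≤ s → 0 ≤ t → ∀ x, φ t (φ s x) = φ (t + s) x)
    (S S' : Set X) (hS : IsCompact S) (hS' : IsCompact S')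
    (hSinv : ∀ t ≥ (0 : ℝ), φ t '' S = S)
    (hS'inv : ∀ t ≥ (0 : ℝ), φ t '' S' = S') :
    stableSet φ (omegaSet φ (S ∩ S')) = stableSet φ S ∩ stableSet φ S' := by
  have hφt : ∀ t : ℝ, 0 ≤ t → Continuous (φ t) := fun t ht =>
    hcont.comp ((continuous_const (y := (⟨t, ht⟩ : {t : ℝ // 0 ≤ t}))).prodMk continuous_id)
  -- omega limit sets of subsets of an invariant compact set stay in it
  have key : ∀ (T : Set X), IsCompact T → (∀ t ≥ (0:ℝ), φ t '' T = T) →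
      ∀ A : Set X, A ⊆ T → omegaSet φ A ⊆ T := by
    intro T hT hTinv A hA y hy
    have h1 : y ∈ closure (⋃ s ≥ (0:ℝ), φ s '' A) := Set.mem_iInter₂.1 hy 0 le_rfl
    have h2 : (⋃ s ≥ (0:ℝ), φ s '' A) ⊆ T := by
      intro w hw
      simp only [Set.mem_iUnion] at hw
      obtain ⟨s, hs, hw⟩ := hw
      rw [← hTinv s hs]
      exact Set.image_mono hA hw
    exact closure_minimal h2 hT.isClosed h1
  -- backward invariance of omega limit sets of points
  have binv : ∀ x : X, ∀ y ∈ omegaSet φ {x}, ∀ t : ℝ, 0 ≤ t →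
      ∃ z ∈ omegaSet φ {x}, φ t z = y := by
    intro x y hy t ht
    set K : ℝ → Set X := fun r => closure (⋃ s ≥ r, φ s '' {x}) with hK
    have hKmono : ∀ r r' : ℝ, r ≤ r' → K r' ⊆ K r := by
      intro r r' h
      exact closure_mono (Set.iUnion₂_subset fun s hs =>
        Set.subset_iUnion₂ (s := fun s _ => φ s '' {x}) s (h.trans hs))
    have hKcl : ∀ r, IsClosed (K r) := fun r => isClosed_closure
    have hKcomp : ∀ r, IsCompact (K r) := fun r => (hKcl r).isCompact
    have hyK : ∀ r, 0 ≤ r → y ∈ K r := fun r hr => Set.mem_iInter₂.1 hy r hr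
    have himg : ∀ r, 0 ≤ r → K (r + t) ⊆ φ t '' K r := by
      intro r hr
      have hclosed : IsClosed (φ t '' K r) := ((hKcomp r).image (hφt t ht)).isClosed
      apply closure_minimal _ hclosed
      intro w hw
      simp only [Set.mem_iUnion, Set.image_singleton, Set.mem_singleton_iff] at hw
      obtain ⟨s, hs, rfl⟩ := hw
      refine ⟨φ (s - t) x, ?_, ?_⟩
      · apply subset_closure
        simp only [Set.mem_iUnion, Set.image_singleton, Set.mem_singleton_iff]
        exact ⟨s - t, by linarith, rfl⟩
      · rw [hadd (s - t) t (by linarith) ht]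
        congr 1
        ring
    set D : ℝ → Set X := fun r => K (max r 0) ∩ φ t ⁻¹' {y} with hD
    have hDne : ∀ r : ℝ, (D r).Nonempty := by
      intro r
      obtain ⟨z, hz, hzy⟩ := himg (max r 0) (le_max_right r 0)
        (hyK (max r 0 + t) (add_nonneg (le_max_right r 0) ht))
      exact ⟨z, hz, hzy⟩
    have hDdir : Directed (· ⊇ ·) D := by
      intro r1 r2
      refine ⟨max r1 r2, ?_, ?_⟩
      · exact Set.inter_subset_inter_left _
          (hKmono _ _ (max_le_max (le_max_left r1 r2) le_rfl))
      · exact Set.inter_subset_inter_left _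
          (hKmono _ _ (max_le_max (le_max_right r1 r2) le_rfl))
    obtain ⟨z, hz⟩ := IsCompact.nonempty_iInter_of_directed_nonempty_isCompact_isClosed
      D hDdir hDne
      (fun r => ((hKcomp _).inter_right ((isClosed_singleton).preimage (hφt t ht))))
      (fun r => ((hKcl _).inter ((isClosed_singleton).preimage (hφt t ht))))
    have hz' : ∀ r, z ∈ D r := Set.mem_iInter.1 hz
    refine ⟨z, ?_, (hz' 0).2⟩
    refine Set.mem_iInter₂.2 fun r hr => ?_
    have := (hz' r).1
    exact hKmono r (max r 0) (le_max_left r 0) this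
  ext x
  simp only [stableSet, Set.mem_inter_iff, Set.mem_setOf_eq]
  constructor
  · intro h
    exact ⟨h.trans (key S hS hSinv _ Set.inter_subset_left),
      h.trans (key S' hS' hS'inv _ Set.inter_subset_right)⟩
  · rintro ⟨h1, h2⟩
    have hx : omegaSet φ {x} ⊆ S ∩ S' := Set.subset_inter h1 h2
    intro y hy
    refine Set.mem_iInter₂.2 fun t htt => ?_
    obtain ⟨z, hz, hzy⟩ := binv x y hy t htt
    apply subset_closure
    simp only [Set.mem_iUnion]
    exact ⟨t, le_rfl, ⟨z, hx hz, hzy⟩⟩
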